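/- There is no equilateral triangle with all three vertices at lattice points: there do not exist three distinct points a, b, c ∈ ℤ × ℤ whose three pairwise squared Euclidean distances (a₁−b₁)² + (a₂−b₂)², (b₁−c₁)² + (b₂−c₂)², (a₁−c₁)² + (a₂−c₂)² are all equal. -/

import Mathlib

lemma aux3 (x y : ℤ) (hx : 0 < x) (h : 3 * x^2 = 4 * y^2) : False := by
  have hirr : Irrational (Real.sqrt 3) := by
    simpa using (Nat.prime_three).irrational_sqrt
  have hx' : (x : ℚ) ≠ 0 := by exact_mod_cast hx.ne'
  have hq : ((2 * y / x : ℚ) : ℝ)^2 = 3 := by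
    push_cast
    field_simp
    have : ((2:ℝ) * y)^2 = 4 * y^2 := by ring
    rw [mul_pow] at this; rw [this, mul_comm ((x:ℝ)^2)]
    exact_mod_cast h.symm
  have : Real.sqrt 3 = |((2 * y / x : ℚ) : ℝ)| := by
    rw [← hq, Real.sqrt_sq_eq_abs]
  rw [this] at hirr
  exact hirr ⟨|2 * y / x|, by push_cast; simp⟩

theorem stmt_14 :
    ¬ ∃ a b c : ℤ × ℤ, a ≠ b ∧ b ≠ c ∧ a ≠ c ∧
      (a.1 - b.1) ^ 2 + (a.2 - b.2) ^ 2 = (b.1 - c.1) ^ 2 + (b.2 - c.2) ^ 2 ∧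
      (b.1 - c.1) ^ 2 + (b.2 - c.2) ^ 2 = (a.1 - c.1) ^ 2 + (a.2 - c.2) ^ 2 := by
  rintro ⟨a, b, c, hab, hbc, hac, h1, h2⟩
  set s : ℤ := (a.1 - b.1) ^ 2 + (a.2 - b.2) ^ 2 with hs
  set D : ℤ := (b.1 - a.1) * (c.2 - a.2) - (b.2 - a.2) * (c.1 - a.1) with hD
  have hspos : 0 < s := by
    rcases lt_or_eq_of_le (by positivity : (0:ℤ) ≤ s) with h | h
    · exact h
    · exfalso
      have h1' : a.1 - b.1 = 0 ∧ a.2 - b.2 = 0 := by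
        constructor <;> nlinarith [sq_nonneg (a.1 - b.1), sq_nonneg (a.2 - b.2)]
      exact hab (Prod.ext (by linarith [h1'.1]) (by linarith [h1'.2]))
  have key : 3 * s^2 = 4 * D^2 := by
    rw [hs, hD]
    linear_combination (8*((a.1-b.1)*(a.1-c.1)+(a.2-b.2)*(a.2-c.2))) * h1 +
      (3*((a.1-b.1)^2+(a.2-b.2)^2) - 4*((a.1-c.1)^2+(a.2-c.2)^2) +
        6*((a.1-b.1)*(a.1-c.1)+(a.2-b.2)*(a.2-c.2))) * h2
  exact aux3 s D hspos key
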